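/- The expected residual map Φ is monotone with respect to the psd order: for psd matrices A, H with positive traces, Φ(A) ⪯ Φ(A + H). -/

import Mathlib

open Matrix

lemma trace_smul_one_sub_posSemidef {n : ℕ} {H : Matrix (Fin n) (Fin n) ℝ} (hH : H.PosSemidef) :
    (H.trace • (1 : Matrix (Fin n) (Fin n) ℝ) - H).PosSemidef := by
  have htr : H.trace = ∑ i, hH.1.eigenvalues i := by
    conv_lhs => rw [hH.1.spectral_theorem, Unitary.conjStarAlgAut_apply]
    rw [Matrix.trace_mul_comm, ← Matrix.mul_assoc]
    simp [Matrix.trace_diagonal]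
  set U : Matrix (Fin n) (Fin n) ℝ := (hH.1.eigenvectorUnitary : Matrix (Fin n) (Fin n) ℝ)
  have hUU : U * star U = 1 := (Matrix.mem_unitaryGroup_iff).mp hH.1.eigenvectorUnitary.2
  have key : H.trace • (1 : Matrix (Fin n) (Fin n) ℝ) - H
      = U * (Matrix.diagonal (fun i => H.trace - hH.1.eigenvalues i)) * star U := by
    have hd : Matrix.diagonal (fun i => H.trace - hH.1.eigenvalues i)
        = H.trace • (1 : Matrix (Fin n) (Fin n) ℝ)
          - Matrix.diagonal (RCLike.ofReal ∘ hH.1.eigenvalues) := by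
      rw [Matrix.smul_one_eq_diagonal, ← Matrix.diagonal_sub]
      rfl
    have hspec : U * Matrix.diagonal (RCLike.ofReal ∘ hH.1.eigenvalues) * star U = H := by
      conv_rhs => rw [hH.1.spectral_theorem, Unitary.conjStarAlgAut_apply]
    rw [hd, Matrix.mul_sub, Matrix.sub_mul, hspec]
    congr 1
    rw [Matrix.mul_smul, Matrix.mul_one, Matrix.smul_mul, hUU]
  rw [key]
  have hdiag : (Matrix.diagonal (fun i => H.trace - hH.1.eigenvalues i)).PosSemidef := by
    rw [Matrix.posSemidef_diagonal_iff]
    intro i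
    rw [htr, sub_nonneg]
    exact Finset.single_le_sum (fun j _ => hH.eigenvalues_nonneg j) (Finset.mem_univ i)
  simpa [Matrix.star_eq_conjTranspose] using hdiag.mul_mul_conjTranspose_same U

lemma posSemidef_smul' {n : ℕ} {P : Matrix (Fin n) (Fin n) ℝ} (hP : P.PosSemidef) {c : ℝ}
    (hc : 0 ≤ c) : (c • P).PosSemidef := by
  refine Matrix.PosSemidef.of_dotProduct_mulVec_nonneg ?_ (fun x => ?_)
  · unfold Matrix.IsHermitian
    rw [Matrix.conjTranspose_smul, hP.1]
    simp
  · rw [Matrix.smul_mulVec, dotProduct_smul, smul_eq_mul]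
    exact mul_nonneg hc (hP.dotProduct_mulVec_nonneg x)

open scoped MatrixOrder in
noncomputable def Matrix.PosSemidef.sqrt {n : ℕ} {H : Matrix (Fin n) (Fin n) ℝ}
    (_hH : H.PosSemidef) : Matrix (Fin n) (Fin n) ℝ :=
  CFC.sqrt H

open scoped MatrixOrder in
lemma Matrix.PosSemidef.sqrt_mul_self {n : ℕ} {H : Matrix (Fin n) (Fin n) ℝ}
    (hH : H.PosSemidef) : hH.sqrt * hH.sqrt = H :=
  CFC.sqrt_mul_sqrt_self H hH.nonneg

open scoped MatrixOrder in
lemma Matrix.PosSemidef.posSemidef_sqrt {n : ℕ} {H : Matrix (Fin n) (Fin n) ℝ}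
    (hH : H.PosSemidef) : hH.sqrt.PosSemidef :=
  (CFC.sqrt_nonneg H).posSemidef

/-- The expected residual map `Φ(M) = M - M²/tr(M)`. -/
noncomputable def Phi {N : ℕ} (M : Matrix (Fin N) (Fin N) ℝ) : Matrix (Fin N) (Fin N) ℝ :=
  M - M.trace⁻¹ • (M * M)

/-- `Φ` is monotone with respect to the psd order: `Φ(A) ⪯ Φ(A + H)`. -/
theorem phi_monotone {N : ℕ} (A H : Matrix (Fin N) (Fin N) ℝ)
    (hA : A.PosSemidef) (hH : H.PosSemidef)
    (htrA : 0 < A.trace) (htrH : 0 < H.trace) :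
    (Phi (A + H) - Phi A).PosSemidef := by
  set t := A.trace with ht
  set s := H.trace with hs
  have ht0 : t ≠ 0 := ne_of_gt htrA
  have hs0 : s ≠ 0 := ne_of_gt htrH
  set a : ℝ := Real.sqrt (s / t)
  set b : ℝ := Real.sqrt (t / s)
  have haa : a * a = s / t := Real.mul_self_sqrt (div_nonneg htrH.le htrA.le)
  have hbb : b * b = t / s := Real.mul_self_sqrt (div_nonneg htrA.le htrH.le)
  have hab : a * b = 1 := by
    rw [← Real.sqrt_mul (div_nonneg htrH.le htrA.le)]
    rw [show s / t * (t / s) = 1 by field_simp]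
    exact Real.sqrt_one
  set M : Matrix (Fin N) (Fin N) ℝ := a • A - b • H with hM
  have hMM : M * M = (s / t) • (A * A) - (A * H) - (H * A) + (t / s) • (H * H) := by
    rw [hM, Matrix.sub_mul, Matrix.mul_sub, Matrix.mul_sub]
    simp only [smul_mul_assoc, Matrix.mul_smul, smul_smul]
    rw [haa, hbb, hab, mul_comm b a, hab]
    module
  set B : Matrix (Fin N) (Fin N) ℝ := hH.sqrt with hB
  have hBB : B * (s • (1 : Matrix (Fin N) (Fin N) ℝ) - H) * B = s • H - H * H := by
    rw [Matrix.mul_sub, Matrix.sub_mul]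
    rw [Matrix.mul_smul, Matrix.mul_one, Matrix.smul_mul]
    rw [hB, hH.sqrt_mul_self]
    congr 1
    calc hH.sqrt * H * hH.sqrt = hH.sqrt * (hH.sqrt * hH.sqrt) * hH.sqrt := by
          rw [hH.sqrt_mul_self]
      _ = (hH.sqrt * hH.sqrt) * (hH.sqrt * hH.sqrt) := by noncomm_ring
      _ = H * H := by rw [hH.sqrt_mul_self]
  have key : Phi (A + H) - Phi A
      = (t + s)⁻¹ • (M * M) + s⁻¹ • (B * (s • (1 : Matrix (Fin N) (Fin N) ℝ) - H) * B) := by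
    rw [hMM, hBB]
    unfold Phi
    rw [Matrix.trace_add, ← ht, ← hs]
    have hexp : (A + H) * (A + H) = A * A + A * H + H * A + H * H := by noncomm_ring
    rw [hexp]
    have hts : t + s ≠ 0 := by positivity
    match_scalars <;> field_simp <;> ring
  rw [key]
  have hMpsd : (M * M).PosSemidef := by
    have hMH : Mᴴ = M := by
      rw [hM, Matrix.conjTranspose_sub, Matrix.conjTranspose_smul, Matrix.conjTranspose_smul,
        hA.1, hH.1]
      simp
    have := Matrix.posSemidef_conjTranspose_mul_self M
    rwa [hMH] at this
  have hBpsd : (B * (s • (1 : Matrix (Fin N) (Fin N) ℝ) - H) * B).PosSemidef := by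
    have h1 : (s • (1 : Matrix (Fin N) (Fin N) ℝ) - H).PosSemidef :=
      trace_smul_one_sub_posSemidef hH
    have := h1.mul_mul_conjTranspose_same B
    rwa [hH.posSemidef_sqrt.1] at this
  exact Matrix.PosSemidef.add (posSemidef_smul' hMpsd (by positivity))
    (posSemidef_smul' hBpsd (by positivity))
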